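/- For every subset S of the symmetric n×n matrices over a commutative unital ring R, the smallest preordering T_S^n containing S equals the quadratic module generated by S together with (∏S')·I_n, where ∏S' is the set of all finite products of elements of S' = {v^T A v : A ∈ S, v ∈ R^n}. -/

import Mathlib

open Matrix

/-- A quadratic module in `M_n(R)`. -/
def IsQM {n : ℕ} {R : Type*} [CommRing R] (M : Set (Matrix (Fin n) (Fin n) R)) : Prop :=
  (∀ A ∈ M, A.IsSymm) ∧ (1 : Matrix (Fin n) (Fin n) R) ∈ M ∧
  (∀ a ∈ M, ∀ b ∈ M, a + b ∈ M) ∧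
  ∀ (A : Matrix (Fin n) (Fin n) R), ∀ m ∈ M, Aᵀ * m * A ∈ M

/-- The smallest quadratic module of `M_n(R)` containing `S`. -/
def QMgen {n : ℕ} {R : Type*} [CommRing R] (S : Set (Matrix (Fin n) (Fin n) R)) :
    Set (Matrix (Fin n) (Fin n) R) :=
  ⋂₀ {M | IsQM M ∧ S ⊆ M}

/-- A preordering in `M_n(R)`: a quadratic module whose intersection with the
center `R·I_n` is closed under multiplication. -/
def IsPre {n : ℕ} {R : Type*} [CommRing R] (M : Set (Matrix (Fin n) (Fin n) R)) : Prop :=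
  IsQM M ∧ ∀ r s : R, r • (1 : Matrix (Fin n) (Fin n) R) ∈ M →
    s • (1 : Matrix (Fin n) (Fin n) R) ∈ M → (r * s) • (1 : Matrix (Fin n) (Fin n) R) ∈ M

/-- The smallest preordering of `M_n(R)` containing `S`. -/
def TSgen {n : ℕ} {R : Type*} [CommRing R] (S : Set (Matrix (Fin n) (Fin n) R)) :
    Set (Matrix (Fin n) (Fin n) R) :=
  ⋂₀ {T | IsPre T ∧ S ⊆ T}

section Aux

variable {n : ℕ} {R : Type*} [CommRing R]

lemma qm_zero_mem {M : Set (Matrix (Fin n) (Fin n) R)} (hM : IsQM M) : 0 ∈ M := by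
  have := hM.2.2.2 0 1 hM.2.1
  simpa using this

lemma qm_sum_mem {M : Set (Matrix (Fin n) (Fin n) R)} (hM : IsQM M) {ι : Type*}
    (s : Finset ι) (f : ι → Matrix (Fin n) (Fin n) R) (h : ∀ i ∈ s, f i ∈ M) :
    ∑ i ∈ s, f i ∈ M :=
  Finset.sum_induction f (· ∈ M) (fun a b ha hb => hM.2.2.1 a ha b hb) (qm_zero_mem hM) h

lemma scalar_decomp (A : Matrix (Fin n) (Fin n) R) (v : Fin n → R) :
    (v ⬝ᵥ A.mulVec v) • (1 : Matrix (Fin n) (Fin n) R)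
      = ∑ k : Fin n, (vecMulVec v (Pi.single k 1))ᵀ * A * vecMulVec v (Pi.single k 1) := by
  ext i j
  have hentry : ∀ k : Fin n,
      ((vecMulVec v (Pi.single k 1))ᵀ * A * vecMulVec v (Pi.single k 1)) i j
        = ((Pi.single k 1 : Fin n → R) i) * ((Pi.single k 1 : Fin n → R) j) * (v ⬝ᵥ A.mulVec v) := by
    intro k
    simp only [Matrix.mul_apply, transpose_apply, vecMulVec_apply, dotProduct, mulVec,
      Finset.sum_mul, Finset.mul_sum]
    rw [Finset.sum_comm]
    apply Finset.sum_congr rfl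
    intro q _
    apply Finset.sum_congr rfl
    intro p _
    ring
  rw [Matrix.sum_apply]
  simp only [hentry]
  rw [← Finset.sum_mul]
  have : ∑ k : Fin n, (Pi.single k 1 : Fin n → R) i * (Pi.single k 1 : Fin n → R) j = (1 : Matrix (Fin n) (Fin n) R) i j := by
    simp [Pi.single_apply, Matrix.one_apply, Finset.sum_ite_eq, eq_comm]
  rw [this]
  simp [Matrix.smul_apply, mul_comm]

lemma qm_scalar_mem {M : Set (Matrix (Fin n) (Fin n) R)} (hM : IsQM M)
    {A} (hA : A ∈ M) (v : Fin n → R) :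
    (v ⬝ᵥ A.mulVec v) • (1 : Matrix (Fin n) (Fin n) R) ∈ M := by
  rw [scalar_decomp]
  exact qm_sum_mem hM _ _ fun k _ => hM.2.2.2 _ _ hA

lemma dot_congrM (A m : Matrix (Fin n) (Fin n) R) (v : Fin n → R) :
    v ⬝ᵥ (Aᵀ * m * A).mulVec v = (A.mulVec v) ⬝ᵥ m.mulVec (A.mulVec v) := by
  rw [← Matrix.mulVec_mulVec, ← Matrix.mulVec_mulVec, Matrix.dotProduct_mulVec,
    Matrix.vecMul_transpose]

lemma isQM_sym : IsQM {A : Matrix (Fin n) (Fin n) R | A.IsSymm} := by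
  refine ⟨fun A hA => hA, Matrix.isSymm_one, fun a ha b hb => ha.add hb, ?_⟩
  intro A m hm
  have hm' : mᵀ = m := hm
  show (Aᵀ * m * A)ᵀ = Aᵀ * m * A
  rw [transpose_mul, transpose_mul, transpose_transpose, hm', mul_assoc]

lemma smul_one_mul_smul_one (r s : R) :
    (r • (1 : Matrix (Fin n) (Fin n) R)) * (s • 1) = (r * s) • 1 := by
  rw [smul_mul_assoc, mul_smul_comm, one_mul, smul_smul]

end Aux

theorem stmt5 {n : ℕ} [NeZero n] {R : Type*} [CommRing R]
    (S : Set (Matrix (Fin n) (Fin n) R)) (hS : ∀ A ∈ S, A.IsSymm) :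
    TSgen S = QMgen (S ∪ (fun r : R => r • (1 : Matrix (Fin n) (Fin n) R)) ''
      (Submonoid.closure {x : R | ∃ A ∈ S, ∃ v : Fin n → R, x = v ⬝ᵥ A.mulVec v} :
        Submonoid R)) := by
  set S' : Set R := {x : R | ∃ A ∈ S, ∃ v : Fin n → R, x = v ⬝ᵥ A.mulVec v} with hS'
  set G : Set (Matrix (Fin n) (Fin n) R) :=
    S ∪ (fun r : R => r • (1 : Matrix (Fin n) (Fin n) R)) '' (Submonoid.closure S' : Submonoid R)
    with hG
  -- G consists of symmetric matrices
  have hGsym : ∀ A ∈ G, A.IsSymm := by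
    rintro A (hA | ⟨r, _, rfl⟩)
    · exact hS A hA
    · simp [Matrix.IsSymm, Matrix.transpose_smul]
  -- the full symmetric set is a QM containing G, hence QMgen G is a QM
  have hQG : IsQM (QMgen G) := by
    refine ⟨?_, ?_, ?_, ?_⟩
    · intro A hA
      exact hA {A | A.IsSymm} ⟨isQM_sym, hGsym⟩
    · intro M hM; exact hM.1.2.1
    · intro a ha b hb M hM; exact hM.1.2.2.1 a (ha M hM) b (hb M hM)
    · intro A m hm M hM; exact hM.1.2.2.2 A m (hm M hM)
  have hGsub : G ⊆ QMgen G := fun x hx M hM => hM.2 hx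
  -- the cone C in R
  set P : Set R := {x : R | ∃ σ ∈ Submonoid.closure S', ∃ r : R, x = σ * r * r} with hP
  set C : AddSubmonoid R := AddSubmonoid.closure P with hC
  have hPC : P ⊆ (C : Set R) := AddSubmonoid.subset_closure
  have hCmul : ∀ a ∈ C, ∀ b ∈ C, a * b ∈ C := by
    intro a ha b hb
    induction ha using AddSubmonoid.closure_induction with
    | mem x hx =>
      induction hb using AddSubmonoid.closure_induction with
      | mem y hy =>
        obtain ⟨σ, hσ, r, rfl⟩ := hx
        obtain ⟨τ, hτ, s, rfl⟩ := hy
        refine hPC ⟨σ * τ, mul_mem hσ hτ, r * s, by ring⟩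
      | zero => simpa using zero_mem C
      | add y z hy hz ihy ihz => rw [mul_add]; exact add_mem ihy ihz
    | zero => simpa using zero_mem C
    | add x y hx hy ihx ihy => rw [add_mul]; exact add_mem ihx ihy
  -- elements of C, scaled on the identity, lie in QMgen G
  have hCmem : ∀ c ∈ C, c • (1 : Matrix (Fin n) (Fin n) R) ∈ QMgen G := by
    intro c hc
    induction hc using AddSubmonoid.closure_induction with
    | mem x hx =>
      obtain ⟨σ, hσ, r, rfl⟩ := hx
      have h1 : σ • (1 : Matrix (Fin n) (Fin n) R) ∈ QMgen G :=
        hGsub (Or.inr ⟨σ, hσ, rfl⟩)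
      have h2 := hQG.2.2.2 (r • 1) _ h1
      have : (r • (1 : Matrix (Fin n) (Fin n) R))ᵀ * (σ • 1) * (r • 1)
          = (σ * r * r) • 1 := by
        rw [Matrix.transpose_smul, Matrix.transpose_one, smul_one_mul_smul_one,
          smul_one_mul_smul_one]
        ring_nf
      rwa [this] at h2
    | zero => simpa using qm_zero_mem hQG
    | add x y hx hy ihx ihy => rw [add_smul]; exact hQG.2.2.1 _ ihx _ ihy
  -- conversely: quadratic forms of elements of QMgen G lie in C
  have hsq : ∀ v : Fin n → R, (v ⬝ᵥ v) ∈ C := by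
    intro v
    refine AddSubmonoid.sum_mem C ?_
    intro i _
    exact hPC ⟨1, one_mem _, v i, by ring⟩
  have hM0 : QMgen G ⊆ {m | m ∈ QMgen G ∧ ∀ v : Fin n → R, v ⬝ᵥ m.mulVec v ∈ C} := by
    intro m hm
    refine hm _ ⟨⟨?_, ?_, ?_, ?_⟩, ?_⟩
    · intro A hA; exact hQG.1 A hA.1
    · exact ⟨hQG.2.1, fun v => by simpa using hsq v⟩
    · rintro a ⟨ha, ha'⟩ b ⟨hb, hb'⟩
      refine ⟨hQG.2.2.1 a ha b hb, fun v => ?_⟩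
      rw [Matrix.add_mulVec, dotProduct_add]
      exact add_mem (ha' v) (hb' v)
    · rintro A m ⟨hm1, hm2⟩
      refine ⟨hQG.2.2.2 A m hm1, fun v => ?_⟩
      rw [dot_congrM]
      exact hm2 _
    · rintro x (hx | ⟨r, hr, rfl⟩)
      · refine ⟨hGsub (Or.inl hx), fun v => ?_⟩
        refine hPC ⟨v ⬝ᵥ x.mulVec v, Submonoid.subset_closure ⟨x, hx, v, rfl⟩, 1, by ring⟩
      · refine ⟨hGsub (Or.inr ⟨r, hr, rfl⟩), fun v => ?_⟩
        have : v ⬝ᵥ (r • (1 : Matrix (Fin n) (Fin n) R)).mulVec v = r * (v ⬝ᵥ v) := by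
          rw [Matrix.smul_mulVec, Matrix.one_mulVec, dotProduct_smul, smul_eq_mul]
        rw [this, dotProduct, Finset.mul_sum]
        refine AddSubmonoid.sum_mem C ?_
        intro i _
        refine hPC ⟨r, hr, v i, ?_⟩
        simp [mul_assoc]
  -- QMgen G is a preordering
  have hPre : IsPre (QMgen G) := by
    refine ⟨hQG, ?_⟩
    intro r s hr hs
    have e : Fin n := ⟨0, Nat.pos_of_ne_zero (NeZero.ne n)⟩
    have extract : ∀ c : R, c • (1 : Matrix (Fin n) (Fin n) R) ∈ QMgen G → c ∈ C := by
      intro c hc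
      have := (hM0 hc).2 (Pi.single e 1)
      have heq : (Pi.single e 1 : Fin n → R) ⬝ᵥ (c • (1 : Matrix (Fin n) (Fin n) R)).mulVec
          (Pi.single e 1) = c := by
        rw [Matrix.smul_mulVec, Matrix.one_mulVec, dotProduct_smul, smul_eq_mul]
        simp [dotProduct, Pi.single_apply]
      rwa [heq] at this
    exact hCmem _ (hCmul _ (extract r hr) _ (extract s hs))
  -- TSgen S is a preordering containing G
  have hTS : IsPre (TSgen S) := by
    have hsymmem : {A : Matrix (Fin n) (Fin n) R | A.IsSymm} ∈ {T | IsPre T ∧ S ⊆ T} := by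
      refine ⟨⟨isQM_sym, fun r s _ _ => ?_⟩, hS⟩
      simp [Matrix.IsSymm, Matrix.transpose_smul]
    refine ⟨⟨?_, ?_, ?_, ?_⟩, ?_⟩
    · intro A hA; exact hA {A | A.IsSymm} hsymmem
    · intro T hT; exact hT.1.1.2.1
    · intro a ha b hb T hT; exact hT.1.1.2.2.1 a (ha T hT) b (hb T hT)
    · intro A m hm T hT; exact hT.1.1.2.2.2 A m (hm T hT)
    · intro r s hr hs T hT; exact hT.1.2 r s (hr T hT) (hs T hT)
  have hSsubT : S ⊆ TSgen S := fun x hx T hT => hT.2 hx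
  have hGsubT : G ⊆ TSgen S := by
    rintro x (hx | ⟨r, hr, rfl⟩)
    · exact hSsubT hx
    · induction hr using Submonoid.closure_induction with
      | mem x hx =>
        obtain ⟨A, hA, v, rfl⟩ := hx
        exact qm_scalar_mem hTS.1 (hSsubT hA) v
      | one => simpa using hTS.1.2.1
      | mul x y hx hy ihx ihy => exact hTS.2 x y ihx ihy
  apply Set.Subset.antisymm
  · intro x hx
    exact hx _ ⟨hPre, fun a ha => hGsub (Or.inl ha)⟩
  · intro x hx
    exact hx _ ⟨hTS.1, hGsubT⟩
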